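/- arXiv:1703.08631 — 9 statements merged into one kernel-verified Lean document; each statement's English description precedes it below -/
import Mathlib

section
/- Suppose d : {(n,m,k) : n,m ≥ 1, k ≥ 0} → ℚ satisfies: (i) d(1,m,k) = (−1)^k · (C(m+k, m−1) + C(m+k−1, m−1)) for all m ≥ 1, k ≥ 0; (ii) d(n,m,0) = C(n+m, n) for all n,m ≥ 1; and (iii) for all n ≥ 2, m ≥ 1, k ≥ 0, n·d(n,m,k) = Σ_{i=n+m−1}^{n+m+k−1} d(n−1, m, i−n−m+1)·d(1, i, n+m+k−1−i) − Σ_{j=n+1}^{n+k} d(1, n−1, j−n)·d(j, m, n+k−j). Then for all n, m ≥ 1 and k ≥ 0, d(n,m,k) = (−1)^k · (n+m+k−1)!/((n−1)!·(m−1)!·k!) · (n+m+2k)/((n+k)·(m+k)). -/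
open Finset

noncomputable def Efun (n m k : ℕ) : ℚ :=
  if n = 0 ∨ m = 0 then (if k = 0 then 1 else 0) else
    (-1) ^ k * ((n + m + k - 1).factorial : ℚ) /
          (((n - 1).factorial : ℚ) * ((m - 1).factorial : ℚ) * (k.factorial : ℚ)) *
          (((n : ℚ) + m + 2 * k) / (((n : ℚ) + k) * ((m : ℚ) + k)))

lemma Efun_succ (x y z : ℕ) : Efun (x+1) (y+1) z =
    (-1) ^ z * (((x+y+z+1).factorial : ℚ) / ((x.factorial : ℚ) * (y.factorial : ℚ) * (z.factorial : ℚ))) *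
      (((x:ℚ) + y + 2*z + 2) / (((x:ℚ)+z+1) * ((y:ℚ)+z+1))) := by
  rw [Efun, if_neg (by simp)]
  rw [show (x+1) + (y+1) + z - 1 = x+y+z+1 from by omega,
      show (x+1) - 1 = x from by omega, show (y+1) - 1 = y from by omega]
  push_cast
  ring

lemma fact_cast_ne (n : ℕ) : ((n.factorial : ℚ)) ≠ 0 := by
  exact_mod_cast n.factorial_ne_zero

lemma fact_cast_succ (n : ℕ) : (((n+1).factorial : ℚ)) = ((n:ℚ)+1) * (n.factorial : ℚ) := by
  rw [Nat.factorial_succ]; push_cast; ring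

-- main recurrence, k+1 case
lemma Rmain (p q k : ℕ) :
    Efun (p+1) (q+1) (k+1) = Efun p (q+1) (k+1) + Efun (p+1) q (k+1) - Efun (p+1) (q+1) k := by
  rcases Nat.eq_zero_or_pos p with hp | hp
  · subst hp
    rcases Nat.eq_zero_or_pos q with hq | hq
    · subst hq
      rw [Efun_succ 0 0 (k+1), Efun_succ 0 0 k, Efun, if_pos (Or.inl rfl),
        Efun, if_pos (Or.inr rfl)]
      rw [show (0:ℕ)+0+(k+1)+1 = (0+0+k+1)+1 from by omega, fact_cast_succ (0+0+k+1),
        fact_cast_succ k]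
      have h1 := fact_cast_ne k
      have h2 : ((k:ℚ)+1) ≠ 0 := by positivity
      push_cast
      field_simp
      ring
    · obtain ⟨q', rfl⟩ : ∃ q', q = q' + 1 := ⟨q - 1, by omega⟩
      rw [show (0:ℕ)+1 = 1 from rfl, show Efun 1 (q'+1+1) (k+1) = Efun (0+1) (q'+1+1) (k+1) from rfl,
        Efun_succ 0 (q'+1) (k+1), Efun, if_pos (Or.inl rfl),
        show Efun 1 (q'+1) (k+1) = Efun (0+1) (q'+1) (k+1) from rfl, Efun_succ 0 q' (k+1),
        show Efun 1 (q'+1+1) k = Efun (0+1) (q'+1+1) k from rfl, Efun_succ 0 (q'+1) k]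
      rw [show (0:ℕ)+(q'+1)+(k+1)+1 = ((0:ℕ)+(q'+1)+k+1)+1 from by omega,
        fact_cast_succ ((0:ℕ)+(q'+1)+k+1),
        show (0:ℕ)+(q'+1)+k+1 = (0+q'+(k+1)+1) from by omega,
        fact_cast_succ q', fact_cast_succ k]
      have h1 := fact_cast_ne k
      have h3 := fact_cast_ne q'
      have h4 := fact_cast_ne ((0:ℕ)+q'+(k+1)+1)
      push_cast
      field_simp
      ring
  · obtain ⟨p', rfl⟩ : ∃ p', p = p' + 1 := ⟨p - 1, by omega⟩
    rcases Nat.eq_zero_or_pos q with hq | hq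
    · subst hq
      rw [Efun_succ (p'+1) 0 (k+1), Efun_succ p' 0 (k+1), Efun_succ (p'+1) 0 k,
        Efun, if_pos (Or.inr rfl)]
      rw [show p'+1+0+(k+1)+1 = (p'+1+0+k+1)+1 from by omega,
        fact_cast_succ (p'+1+0+k+1),
        show p'+1+0+k+1 = p'+0+(k+1)+1 from by omega,
        fact_cast_succ p', fact_cast_succ k]
      have h1 := fact_cast_ne k
      have h3 := fact_cast_ne p'
      have h4 := fact_cast_ne (p'+0+(k+1)+1)
      push_cast
      field_simp
      ring
    · obtain ⟨q', rfl⟩ : ∃ q', q = q' + 1 := ⟨q - 1, by omega⟩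
      rw [Efun_succ (p'+1) (q'+1) (k+1), Efun_succ p' (q'+1) (k+1), Efun_succ (p'+1) q' (k+1),
        Efun_succ (p'+1) (q'+1) k]
      rw [show p'+1+(q'+1)+(k+1)+1 = ((p'+q'+k+3)+1) from by omega,
        show p'+(q'+1)+(k+1)+1 = p'+q'+k+3 from by omega,
        show p'+1+q'+(k+1)+1 = p'+q'+k+3 from by omega,
        show p'+1+(q'+1)+k+1 = p'+q'+k+3 from by omega,
        fact_cast_succ (p'+q'+k+3), fact_cast_succ p', fact_cast_succ q', fact_cast_succ k]
      have h1 := fact_cast_ne (p'+q'+k+3)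
      have h2 := fact_cast_ne p'
      have h3 := fact_cast_ne q'
      have h4 := fact_cast_ne k
      push_cast
      field_simp
      ring

-- Pascal-type recurrence, k = 0 case
lemma R0 (p q : ℕ) : Efun (p+1) (q+1) 0 = Efun p (q+1) 0 + Efun (p+1) q 0 := by
  rcases Nat.eq_zero_or_pos p with hp | hp
  · subst hp
    rcases Nat.eq_zero_or_pos q with hq | hq
    · subst hq
      rw [Efun_succ 0 0 0, Efun, if_pos (Or.inl rfl), Efun, if_pos (Or.inr rfl)]
      norm_num
    · obtain ⟨q', rfl⟩ : ∃ q', q = q' + 1 := ⟨q - 1, by omega⟩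
      rw [show (0:ℕ)+1 = 1 from rfl, show Efun 1 (q'+1+1) 0 = Efun (0+1) (q'+1+1) 0 from rfl,
        Efun_succ 0 (q'+1) 0, Efun, if_pos (Or.inl rfl),
        show Efun 1 (q'+1) 0 = Efun (0+1) (q'+1) 0 from rfl, Efun_succ 0 q' 0]
      rw [show (0:ℕ)+(q'+1)+0+1 = (q'+1)+1 from by omega, show (0:ℕ)+q'+0+1 = q'+1 from by omega,
        fact_cast_succ (q'+1), fact_cast_succ q']
      have h3 := fact_cast_ne q'
      push_cast
      field_simp
      ring
  · obtain ⟨p', rfl⟩ : ∃ p', p = p' + 1 := ⟨p - 1, by omega⟩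
    rcases Nat.eq_zero_or_pos q with hq | hq
    · subst hq
      rw [Efun_succ (p'+1) 0 0, Efun_succ p' 0 0, Efun, if_pos (Or.inr rfl)]
      rw [show p'+1+0+0+1 = (p'+1)+1 from by omega, show p'+0+0+1 = p'+1 from by omega,
        fact_cast_succ (p'+1), fact_cast_succ p']
      have h2 := fact_cast_ne p'
      push_cast
      field_simp
      ring
    · obtain ⟨q', rfl⟩ : ∃ q', q = q' + 1 := ⟨q - 1, by omega⟩
      rw [Efun_succ (p'+1) (q'+1) 0, Efun_succ p' (q'+1) 0, Efun_succ (p'+1) q' 0]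
      rw [show p'+1+(q'+1)+0+1 = (p'+q'+2)+1 from by omega,
        show p'+(q'+1)+0+1 = p'+q'+2 from by omega,
        show p'+1+q'+0+1 = p'+q'+2 from by omega,
        fact_cast_succ (p'+q'+2), fact_cast_succ p', fact_cast_succ q']
      have h1 := fact_cast_ne (p'+q'+2)
      have h2 := fact_cast_ne p'
      have h3 := fact_cast_ne q'
      push_cast
      field_simp
      ring

lemma Efun_zero_left (m k : ℕ) : Efun 0 m k = if k = 0 then 1 else 0 := by
  rw [Efun, if_pos (Or.inl rfl)]

lemma Efun_zero_right (n k : ℕ) : Efun n 0 k = if k = 0 then 1 else 0 := by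
  rw [Efun, if_pos (Or.inr rfl)]

lemma Efun_symm (n m k : ℕ) : Efun n m k = Efun m n k := by
  rw [Efun, Efun]
  rcases Nat.eq_zero_or_pos n with hn | hn
  · subst hn; simp [or_comm]
  rcases Nat.eq_zero_or_pos m with hm | hm
  · subst hm; simp [or_comm]
  rw [if_neg (by omega), if_neg (by omega),
    show n + m + k - 1 = m + n + k - 1 from by omega]
  ring

noncomputable def Ffun (a b c K : ℕ) : ℚ :=
  ∑ j ∈ range (K+1), Efun a b j * Efun (a+b+j) c (K-j)

lemma Ffun_a0 (b c K : ℕ) : Ffun 0 b c K = Efun b c K := by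
  rw [Ffun, Finset.sum_eq_single 0]
  · simp [Efun_zero_left]
  · intro j _ hj
    rw [Efun_zero_left, if_neg hj, zero_mul]
  · intro h; exact absurd (Finset.mem_range.2 (by omega)) h

lemma Ffun_b0 (a c K : ℕ) : Ffun a 0 c K = Efun a c K := by
  rw [Ffun, Finset.sum_eq_single 0]
  · simp [Efun_zero_right]
  · intro j _ hj
    rw [Efun_zero_right, if_neg hj, zero_mul]
  · intro h; exact absurd (Finset.mem_range.2 (by omega)) h

lemma Ffun_c0 (a b K : ℕ) : Ffun a b 0 K = Efun a b K := by
  rw [Ffun, Finset.sum_eq_single K]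
  · rw [Nat.sub_self, Efun_zero_right, if_pos rfl, mul_one]
  · intro j hj hjK
    rw [Efun_zero_right, if_neg (by rw [Finset.mem_range] at hj; omega), mul_zero]
  · intro h; exact absurd (Finset.mem_range.2 (by omega)) h

lemma Ffun_K0 (a b c : ℕ) : Ffun a b c 0 = Efun a b 0 * Efun (a+b) c 0 := by
  rw [Ffun]; simp

-- symmetry at K = 0 in last two arguments
lemma Ffun_K0_swap (a b c : ℕ) : Ffun a b c 0 = Ffun a c b 0 := by
  rw [Ffun_K0, Ffun_K0]
  rcases Nat.eq_zero_or_pos a with ha | ha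
  · subst ha
    simp only [Efun_zero_left, Nat.zero_add]
    norm_num [Efun_symm b c 0]
  obtain ⟨a', rfl⟩ : ∃ a', a = a' + 1 := ⟨a - 1, by omega⟩
  rcases Nat.eq_zero_or_pos b with hb | hb
  · subst hb
    simp only [Efun_zero_right, if_pos rfl, mul_one, Nat.add_zero]
    simp [Efun_zero_left, mul_comm]
  rcases Nat.eq_zero_or_pos c with hc | hc
  · subst hc
    simp only [Efun_zero_right, if_pos rfl, mul_one, Nat.add_zero]
    simp [Efun_zero_left, mul_comm]
  obtain ⟨b', rfl⟩ : ∃ b', b = b' + 1 := ⟨b - 1, by omega⟩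
  obtain ⟨c', rfl⟩ : ∃ c', c = c' + 1 := ⟨c - 1, by omega⟩
  rw [Efun_succ a' b' 0, Efun_succ a' c' 0,
    show a'+1+(b'+1) = (a'+b'+1)+1 from by omega,
    show a'+1+(c'+1) = (a'+c'+1)+1 from by omega,
    Efun_succ (a'+b'+1) c' 0, Efun_succ (a'+c'+1) b' 0,
    show a'+b'+1+c'+0+1 = a'+b'+c'+2 from by omega,
    show a'+c'+1+b'+0+1 = a'+b'+c'+2 from by omega,
    show a'+b'+0+1 = a'+b'+1 from by omega,
    show a'+c'+0+1 = a'+c'+1 from by omega,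
    fact_cast_succ (a'+b'), fact_cast_succ (a'+c')]
  have h1 := fact_cast_ne (a'+b')
  have h2 := fact_cast_ne (a'+c')
  have h3 := fact_cast_ne a'
  have h4 := fact_cast_ne b'
  have h5 := fact_cast_ne c'
  push_cast
  field_simp
  ring

lemma Frec (a b c K : ℕ) :
    Ffun (a+1) (b+1) (c+1) (K+1) =
      Ffun a (b+1) (c+1) (K+1) + Ffun (a+1) b (c+1) (K+1) + Ffun (a+1) (b+1) c (K+1)
        - 2 * Ffun (a+1) (b+1) (c+1) K := by
  have e1 : Ffun (a+1) (b+1) (c+1) (K+1)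
      = ((∑ j ∈ range (K+2), Efun (a+1) (b+1) j * Efun (a+b+j+1) (c+1) (K+1-j))
         + (∑ j ∈ range (K+2), Efun (a+1) (b+1) j * Efun (a+b+j+2) c (K+1-j)))
        - Ffun (a+1) (b+1) (c+1) K := by
    rw [Ffun, Ffun, ← Finset.sum_add_distrib]
    rw [Finset.sum_range_succ (f := fun j => Efun (a+1) (b+1) j * Efun (a+1+(b+1)+j) (c+1) (K+1-j)),
        Finset.sum_range_succ (f := fun j => Efun (a+1) (b+1) j * Efun (a+b+j+1) (c+1) (K+1-j)
          + Efun (a+1) (b+1) j * Efun (a+b+j+2) c (K+1-j))]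
    have hterm : ∀ j ∈ range (K+1),
        Efun (a+1) (b+1) j * Efun (a+1+(b+1)+j) (c+1) (K+1-j)
          = (Efun (a+1) (b+1) j * Efun (a+b+j+1) (c+1) (K+1-j)
              + Efun (a+1) (b+1) j * Efun (a+b+j+2) c (K+1-j))
            - Efun (a+1) (b+1) j * Efun (a+1+(b+1)+j) (c+1) (K-j) := by
      intro j hj
      rw [Finset.mem_range] at hj
      rw [show K+1-j = (K-j)+1 from by omega, show a+1+(b+1)+j = (a+b+j+1)+1 from by omega,
        Rmain (a+b+j+1) c (K-j), show a+b+j+1+1 = a+b+j+2 from by omega]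
      ring
    rw [Finset.sum_congr rfl hterm, Finset.sum_sub_distrib]
    have htop : Efun (a+1) (b+1) (K+1) * Efun (a+1+(b+1)+(K+1)) (c+1) (K+1-(K+1))
        = Efun (a+1) (b+1) (K+1) * Efun (a+b+(K+1)+1) (c+1) (K+1-(K+1))
          + Efun (a+1) (b+1) (K+1) * Efun (a+b+(K+1)+2) c (K+1-(K+1)) := by
      rw [show K+1-(K+1) = 0 from by omega,
        show a+1+(b+1)+(K+1) = (a+b+(K+1)+1)+1 from by omega,
        R0 (a+b+(K+1)+1) c, show a+b+(K+1)+1+1 = a+b+(K+1)+2 from by omega]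
      ring
    rw [htop]
    ring
  have e2 : (∑ j ∈ range (K+2), Efun (a+1) (b+1) j * Efun (a+b+j+2) c (K+1-j))
      = Ffun (a+1) (b+1) c (K+1) := by
    rw [Ffun]
    exact Finset.sum_congr rfl fun j _ => by
      rw [show a+1+(b+1)+j = a+b+j+2 from by omega]
  have e3 : (∑ j ∈ range (K+2), Efun (a+1) (b+1) j * Efun (a+b+j+1) (c+1) (K+1-j))
      = Ffun a (b+1) (c+1) (K+1) + Ffun (a+1) b (c+1) (K+1) - Ffun (a+1) (b+1) (c+1) K := by
    rw [Finset.sum_range_succ' (f := fun j => Efun (a+1) (b+1) j * Efun (a+b+j+1) (c+1) (K+1-j))]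
    have hterm : ∀ j ∈ range (K+1),
        Efun (a+1) (b+1) (j+1) * Efun (a+b+(j+1)+1) (c+1) (K+1-(j+1))
          = (Efun a (b+1) (j+1) * Efun (a+b+j+2) (c+1) (K-j)
              + Efun (a+1) b (j+1) * Efun (a+b+j+2) (c+1) (K-j))
            - Efun (a+1) (b+1) j * Efun (a+b+j+2) (c+1) (K-j) := by
      intro j hj
      rw [show K+1-(j+1) = K-j from by omega, show a+b+(j+1)+1 = a+b+j+2 from by omega,
        Rmain a b j]
      ring
    rw [Finset.sum_congr rfl hterm]
    rw [show Efun (a+1) (b+1) 0 * Efun (a+b+0+1) (c+1) (K+1-0)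
        = Efun a (b+1) 0 * Efun (a+b+1) (c+1) (K+1) + Efun (a+1) b 0 * Efun (a+b+1) (c+1) (K+1)
        from by rw [show a+b+0+1 = a+b+1 from by omega, show K+1-0 = K+1 from rfl, R0 a b]; ring]
    rw [Finset.sum_sub_distrib, Finset.sum_add_distrib]
    have f1 : Ffun a (b+1) (c+1) (K+1)
        = (∑ j ∈ range (K+1), Efun a (b+1) (j+1) * Efun (a+b+j+2) (c+1) (K-j))
          + Efun a (b+1) 0 * Efun (a+b+1) (c+1) (K+1) := by
      rw [Ffun, Finset.sum_range_succ' (f := fun j => Efun a (b+1) j * Efun (a+(b+1)+j) (c+1) (K+1-j))]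
      congr 1
      exact Finset.sum_congr rfl fun j _ => by
        rw [show a+(b+1)+(j+1) = a+b+j+2 from by omega, show K+1-(j+1) = K-j from by omega]
    have f2 : Ffun (a+1) b (c+1) (K+1)
        = (∑ j ∈ range (K+1), Efun (a+1) b (j+1) * Efun (a+b+j+2) (c+1) (K-j))
          + Efun (a+1) b 0 * Efun (a+b+1) (c+1) (K+1) := by
      rw [Ffun, Finset.sum_range_succ' (f := fun j => Efun (a+1) b j * Efun (a+1+b+j) (c+1) (K+1-j))]
      congr 1
      · exact Finset.sum_congr rfl fun j _ => by
          rw [show a+1+b+(j+1) = a+b+j+2 from by omega, show K+1-(j+1) = K-j from by omega]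
      · rw [show a+1+b+0 = a+b+1 from by omega, show K+1-0 = K+1 from by omega]
    have f3 : Ffun (a+1) (b+1) K = Ffun (a+1) (b+1) K := rfl
    have f4 : Ffun (a+1) (b+1) (c+1) K
        = ∑ j ∈ range (K+1), Efun (a+1) (b+1) j * Efun (a+b+j+2) (c+1) (K-j) := by
      rw [Ffun]
      exact Finset.sum_congr rfl fun j _ => by
        rw [show a+1+(b+1)+j = a+b+j+2 from by omega]
    rw [f1, f2, f4]
    ring
  rw [e1, e2, e3]
  ring

lemma Fswap_aux : ∀ N a b c K, a + b + c + K ≤ N → Ffun a b c K = Ffun a c b K := by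
  intro N
  induction N with
  | zero =>
    intro a b c K h
    obtain ⟨rfl, rfl, rfl, rfl⟩ : a = 0 ∧ b = 0 ∧ c = 0 ∧ K = 0 := by omega
    rfl
  | succ N ih =>
    intro a b c K h
    rcases Nat.eq_zero_or_pos a with ha | ha
    · subst ha; rw [Ffun_a0, Ffun_a0, Efun_symm]
    rcases Nat.eq_zero_or_pos b with hb | hb
    · subst hb; rw [Ffun_b0, Ffun_c0]
    rcases Nat.eq_zero_or_pos c with hc | hc
    · subst hc; rw [Ffun_b0, Ffun_c0]
    rcases Nat.eq_zero_or_pos K with hK | hK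
    · subst hK; exact Ffun_K0_swap a b c
    obtain ⟨a', rfl⟩ : ∃ a', a = a' + 1 := ⟨a - 1, by omega⟩
    obtain ⟨b', rfl⟩ : ∃ b', b = b' + 1 := ⟨b - 1, by omega⟩
    obtain ⟨c', rfl⟩ : ∃ c', c = c' + 1 := ⟨c - 1, by omega⟩
    obtain ⟨K', rfl⟩ : ∃ K', K = K' + 1 := ⟨K - 1, by omega⟩
    rw [Frec a' b' c' K', Frec a' c' b' K']
    rw [ih a' (b'+1) (c'+1) (K'+1) (by omega), ih (a'+1) b' (c'+1) (K'+1) (by omega),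
      ih (a'+1) (b'+1) c' (K'+1) (by omega), ih (a'+1) (b'+1) (c'+1) K' (by omega)]
    ring

lemma Fswap (a b c K : ℕ) : Ffun a b c K = Ffun a c b K :=
  Fswap_aux (a+b+c+K) a b c K le_rfl

-- Chevalley base case value
lemma Efun_one (m k : ℕ) (hm : 1 ≤ m) :
    Efun 1 m k = (-1) ^ k * (((m + k).choose (m - 1) : ℚ) + ((m + k - 1).choose (m - 1) : ℚ)) := by
  obtain ⟨y, rfl⟩ : ∃ y, m = y + 1 := ⟨m - 1, by omega⟩
  have h := Efun_succ 0 y k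
  norm_num at h
  rw [h, show y + 1 + k - 1 = y + k from by omega, show y + 1 - 1 = y from by omega,
    show y + 1 + k = y + k + 1 from by omega]
  rw [Nat.cast_choose ℚ (show y ≤ y + k + 1 from by omega),
    Nat.cast_choose ℚ (show y ≤ y + k from by omega),
    show y + k + 1 - y = k + 1 from by omega, show y + k - y = k from by omega,
    fact_cast_succ (y+k), fact_cast_succ k]
  have h1 := fact_cast_ne (y+k)
  have h2 := fact_cast_ne y
  have h3 := fact_cast_ne k
  push_cast
  field_simp
  ring

-- lowest order base case value
lemma Efun_k0 (n m : ℕ) (hn : 1 ≤ n) (hm : 1 ≤ m) :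
    Efun n m 0 = ((n + m).choose n : ℚ) := by
  obtain ⟨x, rfl⟩ : ∃ x, n = x + 1 := ⟨n - 1, by omega⟩
  obtain ⟨y, rfl⟩ : ∃ y, m = y + 1 := ⟨m - 1, by omega⟩
  rw [Efun_succ x y 0]
  rw [Nat.cast_choose ℚ (show x + 1 ≤ x + 1 + (y + 1) from by omega),
    show x + 1 + (y + 1) - (x + 1) = y + 1 from by omega,
    show x + 1 + (y + 1) = (x + y + 1) + 1 from by omega,
    show x + y + 0 + 1 = x + y + 1 from by omega,
    fact_cast_succ (x+y+1), fact_cast_succ x, fact_cast_succ y]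
  have h1 := fact_cast_ne (x+y+1)
  have h2 := fact_cast_ne x
  have h3 := fact_cast_ne y
  push_cast
  field_simp
  ring

lemma Efun_one_zero (q : ℕ) (hq : 1 ≤ q) : Efun 1 q 0 = (q : ℚ) + 1 := by
  obtain ⟨y, rfl⟩ : ∃ y, q = y + 1 := ⟨q - 1, by omega⟩
  have h := Efun_succ 0 y 0
  norm_num at h
  rw [h, fact_cast_succ y]
  have h2 := fact_cast_ne y
  push_cast
  field_simp
  ring

lemma Fswap12 (a b c K : ℕ) : Ffun a b c K = Ffun b a c K := by
  rw [Ffun, Ffun]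
  exact Finset.sum_congr rfl fun j _ => by
    rw [Efun_symm a b j, show a+b+j = b+a+j from by omega]

/-- If `d : ℕ → ℕ → ℕ → ℚ`, `d n m k` representing the ordinary `K`-theory structure
constant `d^{n+m+k}_{n,m}(1)`, satisfies the Chevalley base case, the lowest-order base
case, and the associativity recursion, then it is given by the closed form. -/
theorem stmt0 (d : ℕ → ℕ → ℕ → ℚ)
    (h1 : ∀ m k : ℕ, 1 ≤ m →
      d 1 m k = (-1) ^ k * (((m + k).choose (m - 1) : ℚ) + ((m + k - 1).choose (m - 1) : ℚ)))
    (h2 : ∀ n m : ℕ, 1 ≤ n → 1 ≤ m → d n m 0 = ((n + m).choose n : ℚ))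
    (h3 : ∀ n m k : ℕ, 2 ≤ n → 1 ≤ m →
      (n : ℚ) * d n m k =
        (∑ i ∈ Icc (n + m - 1) (n + m + k - 1), d (n - 1) m (i + 1 - n - m) * d 1 i (n + m + k - 1 - i))
        - ∑ j ∈ Icc (n + 1) (n + k), d 1 (n - 1) (j - n) * d j m (n + k - j)) :
    ∀ n m k : ℕ, 1 ≤ n → 1 ≤ m →
      d n m k = (-1) ^ k * ((n + m + k - 1).factorial : ℚ) /
          (((n - 1).factorial : ℚ) * ((m - 1).factorial : ℚ) * (k.factorial : ℚ)) *
          (((n : ℚ) + m + 2 * k) / (((n : ℚ) + k) * ((m : ℚ) + k))) := by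
  have Hone : ∀ q k : ℕ, 1 ≤ q → d 1 q k = Efun 1 q k := by
    intro q k hq
    rw [h1 q k hq, Efun_one q k hq]
  suffices H : ∀ k n m : ℕ, 1 ≤ n → 1 ≤ m → d n m k = Efun n m k by
    intro n m k hn hm
    rw [H k n m hn hm, Efun, if_neg (by omega)]
  intro k
  induction k using Nat.strong_induction_on with
  | _ k ihk =>
    intro n
    induction n using Nat.strong_induction_on with
    | _ n ihn =>
      intro m hn hm
      rcases Nat.lt_or_ge n 2 with h2n | h2n
      · -- n = 1
        obtain rfl : n = 1 := by omega
        exact Hone m k hm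
      · -- 2 ≤ n
        have key := h3 n m k h2n hm
        -- convert d's to Efun's inside the sums
        have hA : ∑ i ∈ Icc (n + m - 1) (n + m + k - 1), d (n - 1) m (i + 1 - n - m) * d 1 i (n + m + k - 1 - i)
            = ∑ i ∈ Icc (n + m - 1) (n + m + k - 1), Efun (n - 1) m (i + 1 - n - m) * Efun 1 i (n + m + k - 1 - i) := by
          refine Finset.sum_congr rfl fun i hi => ?_
          rw [Finset.mem_Icc] at hi
          have ht : i + 1 - n - m ≤ k := by omega
          rcases Nat.lt_or_ge (i + 1 - n - m) k with htlt | htge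
          · rw [ihk _ htlt (n-1) m (by omega) hm, Hone i _ (by omega)]
          · have : i + 1 - n - m = k := by omega
            rw [this, ihn (n-1) (by omega) m (by omega) hm, Hone i _ (by omega)]
        have hB : ∑ j ∈ Icc (n + 1) (n + k), d 1 (n - 1) (j - n) * d j m (n + k - j)
            = ∑ j ∈ Icc (n + 1) (n + k), Efun 1 (n - 1) (j - n) * Efun j m (n + k - j) := by
          refine Finset.sum_congr rfl fun j hj => ?_
          rw [Finset.mem_Icc] at hj
          rw [Hone (n-1) _ (by omega), ihk (n + k - j) (by omega) j m (by omega) hm]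
        rw [hA, hB] at key
        -- identify the sums with Ffun's
        have hA2 : ∑ i ∈ Icc (n + m - 1) (n + m + k - 1), Efun (n - 1) m (i + 1 - n - m) * Efun 1 i (n + m + k - 1 - i)
            = Ffun (n-1) m 1 k := by
          rw [← Finset.Ico_add_one_right_eq_Icc, Finset.sum_Ico_eq_sum_range]
          rw [show n + m + k - 1 + 1 - (n + m - 1) = k + 1 from by omega, Ffun]
          refine Finset.sum_congr rfl fun t ht => ?_
          rw [Finset.mem_range] at ht
          rw [show n + m - 1 + t + 1 - n - m = t from by omega,
            show n + m + k - 1 - (n + m - 1 + t) = k - t from by omega,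
            Efun_symm 1 (n + m - 1 + t) (k - t),
            show n - 1 + m + t = n + m - 1 + t from by omega]
        have hB2 : ∑ j ∈ Icc (n + 1) (n + k), Efun 1 (n - 1) (j - n) * Efun j m (n + k - j)
            = Ffun 1 (n-1) m k - (n : ℚ) * Efun n m k := by
          rw [← Finset.Ico_add_one_right_eq_Icc, Finset.sum_Ico_eq_sum_range,
            show n + k + 1 - (n + 1) = k from by omega]
          rw [Ffun, Finset.sum_range_succ' (f := fun j => Efun 1 (n-1) j * Efun (1+(n-1)+j) m (k-j))]
          rw [Efun_one_zero (n-1) (by omega), show 1+(n-1)+0 = n from by omega,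
            show k - 0 = k from by omega]
          have hc : ((n - 1 : ℕ) : ℚ) + 1 = (n : ℚ) := by
            have : ((n - 1 : ℕ) : ℚ) = (n : ℚ) - 1 := by
              rw [Nat.cast_sub (by omega)]; norm_num
            rw [this]; ring
          rw [hc]
          have : ∑ j ∈ range k, Efun 1 (n - 1) (n + 1 + j - n) * Efun (n + 1 + j) m (n + k - (n + 1 + j))
              = ∑ j ∈ range k, Efun 1 (n-1) (j+1) * Efun (1+(n-1)+(j+1)) m (k-(j+1)) := by
            refine Finset.sum_congr rfl fun j hj => ?_
            rw [Finset.mem_range] at hj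
            rw [show n + 1 + j - n = j + 1 from by omega,
              show 1+(n-1)+(j+1) = n + 1 + j from by omega,
              show n + k - (n + 1 + j) = k - (j+1) from by omega]
          rw [this]
          ring
        rw [hA2, hB2] at key
        have hsw : Ffun 1 (n-1) m k = Ffun (n-1) m 1 k := by
          rw [Fswap12 1 (n-1) m k, Fswap (n-1) 1 m k]
        rw [hsw] at key
        have hn0 : (n : ℚ) ≠ 0 := by positivity
        have : (n : ℚ) * d n m k = (n : ℚ) * Efun n m k := by linarith [key]
        exact mul_left_cancel₀ hn0 this
end

section
/- For all integers n, m ≥ 1 and k ≥ 0, Σ_{j=0}^{k} (−1)^j · (n+m+j−1)!·(n+m+2j)/(n!·m!·j!) = (−1)^k · (n+m+k)!/(n!·m!·k!). -/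
open Finset

/-- The identity `Σ_{j=0}^{k} (−1)^j (n+m+j−1)!·(n+m+2j)/(n!·m!·j!) = (−1)^k (n+m+k)!/(n!·m!·k!)`
establishing the closed form for the ideal-sheaf basis structure constants `b^{n+m+k}_{n,m}(1)`. -/
theorem stmt1 (n m k : ℕ) (hn : 1 ≤ n) (hm : 1 ≤ m) :
    ∑ j ∈ range (k + 1),
      (-1 : ℚ) ^ j * ((n + m + j - 1).factorial : ℚ) * ((n : ℚ) + m + 2 * j) /
        ((n.factorial : ℚ) * (m.factorial : ℚ) * (j.factorial : ℚ))
      = (-1) ^ k * ((n + m + k).factorial : ℚ) /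
          ((n.factorial : ℚ) * (m.factorial : ℚ) * (k.factorial : ℚ)) := by
  have hfac : ∀ j : ℕ, ((n + m + j).factorial : ℚ)
      = ((n + m + j - 1).factorial : ℚ) * ((n : ℚ) + m + j) := by
    intro j
    have h1 : n + m + j = (n + m + j - 1) + 1 := by omega
    rw [h1, Nat.factorial_succ]
    push_cast
    have : ((n + m + j - 1 : ℕ) : ℚ) = (n : ℚ) + m + j - 1 := by push_cast [Nat.cast_sub (by omega : 1 ≤ n + m + j)]; ring
    rw [this]; ring
  induction k with
  | zero =>
      rw [Finset.sum_range_one]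
      have := hfac 0
      simp only [Nat.add_zero] at this ⊢
      rw [this]
      push_cast
      ring
  | succ k ih =>
      rw [Finset.sum_range_succ, ih]
      have hk1 : ((k+1).factorial : ℚ) = (k.factorial : ℚ) * (k + 1) := by
        rw [Nat.factorial_succ]; push_cast; ring
      have hfk : ((n + m + (k+1)).factorial : ℚ)
          = ((n + m + k).factorial : ℚ) * ((n : ℚ) + m + k + 1) := by
        have h1 : n + m + (k+1) = (n + m + k) + 1 := by omega
        rw [h1, Nat.factorial_succ]; push_cast; ring
      have hfk2 : ((n + m + (k+1) - 1).factorial : ℚ) = ((n + m + k).factorial : ℚ) := by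
        rw [show n + m + (k+1) - 1 = n + m + k from by omega]
      have hk0 : (k.factorial : ℚ) ≠ 0 := by positivity
      have hn0 : (n.factorial : ℚ) ≠ 0 := by positivity
      have hm0 : (m.factorial : ℚ) ≠ 0 := by positivity
      have hk10 : ((k:ℚ) + 1) ≠ 0 := by positivity
      rw [hfk, hfk2, hk1]
      push_cast
      field_simp
      ring
end

section
/- For all integers n, m ≥ 1 and j ≥ 0, D(n,m,j) − D(n+1,m,j−1) − D(n,m+1,j−1) + D(n+1,m+1,j−2) = (−1)^j · (n+m+j−1)!·(n+m+2j)/(n!·m!·j!), where a term D(n',m',k') is interpreted as 0 whenever k' < 0. -/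
/-- The closed-form ordinary `K`-theory structure constant `D n m k = d^{n+m+k}_{n,m}(1)`,
extended by `0` to negative values of `k`. -/
noncomputable def D (n m : ℕ) (k : ℤ) : ℚ :=
  if 0 ≤ k then
    (-1) ^ k.toNat * ((n + m + k.toNat - 1).factorial : ℚ) /
        (((n - 1).factorial : ℚ) * ((m - 1).factorial : ℚ) * ((k.toNat).factorial : ℚ)) *
        (((n : ℚ) + m + 2 * (k.toNat : ℚ)) / (((n : ℚ) + (k.toNat : ℚ)) * ((m : ℚ) + (k.toNat : ℚ))))
  else 0

lemma D_neg (n m : ℕ) (k : ℤ) (h : k < 0) : D n m k = 0 := by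
  rw [D, if_neg (by omega)]

lemma D_succ (n m k N : ℕ) (hN : N = n + m + k + 1) :
    D (n+1) (m+1) ((k : ℕ) : ℤ) =
      (-1) ^ k * ((N.factorial : ℚ)) /
        ((n.factorial : ℚ) * (m.factorial : ℚ) * (k.factorial : ℚ)) *
        (((n : ℚ) + m + 2 * k + 2) / (((n : ℚ) + k + 1) * ((m : ℚ) + k + 1))) := by
  subst hN
  rw [D, if_pos (by positivity), Int.toNat_natCast]
  have : n + 1 + (m + 1) + k - 1 = n + m + k + 1 := by omega
  rw [this]
  push_cast
  ring_nf

lemma key (x y z : ℚ) (hx1 : x+1 ≠ 0) (hy1 : y+1 ≠ 0) (hz1 : z+1 ≠ 0) (hz2 : z+2 ≠ 0)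
    (h1 : x+z+3 ≠ 0) (h2 : y+z+3 ≠ 0) (h3 : x+z+2 ≠ 0) (h4 : y+z+2 ≠ 0) :
    (x+y+2*z+6)/((z+1)*(z+2)*(x+z+3)*(y+z+3))
      + (x+y+2*z+5)/((x+1)*(z+1)*(x+z+3)*(y+z+2))
      + (x+y+2*z+5)/((y+1)*(z+1)*(x+z+2)*(y+z+3))
      + (x+y+2*z+4)/((x+1)*(y+1)*(x+z+2)*(y+z+2))
    = (x+y+2*z+6)/((x+1)*(y+1)*(z+1)*(z+2)) := by
  field_simp
  ring

lemma e1 (n m j : ℕ) :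
    D (n+1) (m+1) ((j+1+1 : ℕ) : ℤ) =
      (-1:ℚ)^j * (((n+m+j+3).factorial : ℚ)) /
          ((n.factorial : ℚ) * (m.factorial : ℚ) * (j.factorial : ℚ)) *
        (((n:ℚ)+m+2*(j:ℚ)+6) / (((j:ℚ)+1)*((j:ℚ)+2)*((n:ℚ)+(j:ℚ)+3)*((m:ℚ)+(j:ℚ)+3))) := by
  rw [show ((j+1+1 : ℕ) : ℤ) = ((j+2 : ℕ) : ℤ) by push_cast; ring,
    D_succ n m (j+2) (n+m+j+3) (by omega)]
  have hC : ((j.factorial : ℚ)) ≠ 0 := Nat.cast_ne_zero.mpr (Nat.factorial_ne_zero _)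
  have h1 : ((j:ℚ)+1) ≠ 0 := by positivity
  have h2 : ((j:ℚ)+2) ≠ 0 := by positivity
  have h3 : ((n:ℚ)+(j:ℚ)+3) ≠ 0 := by positivity
  have h4 : ((m:ℚ)+(j:ℚ)+3) ≠ 0 := by positivity
  simp only [Nat.factorial_succ]
  push_cast
  field_simp
  ring

lemma e2 (n m j : ℕ) :
    D (n+1+1) (m+1) (((j+1+1 : ℕ) : ℤ) - 1) =
      -((-1:ℚ)^j * (((n+m+j+3).factorial : ℚ)) /
          ((n.factorial : ℚ) * (m.factorial : ℚ) * (j.factorial : ℚ)) *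
        (((n:ℚ)+m+2*(j:ℚ)+5) / (((n:ℚ)+1)*((j:ℚ)+1)*((n:ℚ)+(j:ℚ)+3)*((m:ℚ)+(j:ℚ)+2)))) := by
  rw [show (((j+1+1 : ℕ) : ℤ) - 1) = ((j+1 : ℕ) : ℤ) by push_cast; ring,
    show (n+1+1) = (n+1)+1 from rfl,
    D_succ (n+1) m (j+1) (n+m+j+3) (by omega)]
  have hC : ((j.factorial : ℚ)) ≠ 0 := Nat.cast_ne_zero.mpr (Nat.factorial_ne_zero _)
  have h1 : ((j:ℚ)+1) ≠ 0 := by positivity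
  have h2 : ((n:ℚ)+1) ≠ 0 := by positivity
  have h3 : ((n:ℚ)+(j:ℚ)+3) ≠ 0 := by positivity
  have h4 : ((m:ℚ)+(j:ℚ)+2) ≠ 0 := by positivity
  simp only [Nat.factorial_succ]
  push_cast
  field_simp
  ring

lemma e3 (n m j : ℕ) :
    D (n+1) (m+1+1) (((j+1+1 : ℕ) : ℤ) - 1) =
      -((-1:ℚ)^j * (((n+m+j+3).factorial : ℚ)) /
          ((n.factorial : ℚ) * (m.factorial : ℚ) * (j.factorial : ℚ)) *
        (((n:ℚ)+m+2*(j:ℚ)+5) / (((m:ℚ)+1)*((j:ℚ)+1)*((n:ℚ)+(j:ℚ)+2)*((m:ℚ)+(j:ℚ)+3)))) := by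
  rw [show (((j+1+1 : ℕ) : ℤ) - 1) = ((j+1 : ℕ) : ℤ) by push_cast; ring,
    show (m+1+1) = (m+1)+1 from rfl,
    D_succ n (m+1) (j+1) (n+m+j+3) (by omega)]
  have hC : ((j.factorial : ℚ)) ≠ 0 := Nat.cast_ne_zero.mpr (Nat.factorial_ne_zero _)
  have h1 : ((j:ℚ)+1) ≠ 0 := by positivity
  have h2 : ((m:ℚ)+1) ≠ 0 := by positivity
  have h3 : ((n:ℚ)+(j:ℚ)+2) ≠ 0 := by positivity
  have h4 : ((m:ℚ)+(j:ℚ)+3) ≠ 0 := by positivity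
  simp only [Nat.factorial_succ]
  push_cast
  field_simp
  ring

lemma e4 (n m j : ℕ) :
    D (n+1+1) (m+1+1) (((j+1+1 : ℕ) : ℤ) - 2) =
      (-1:ℚ)^j * (((n+m+j+3).factorial : ℚ)) /
          ((n.factorial : ℚ) * (m.factorial : ℚ) * (j.factorial : ℚ)) *
        (((n:ℚ)+m+2*(j:ℚ)+4) / (((n:ℚ)+1)*((m:ℚ)+1)*((n:ℚ)+(j:ℚ)+2)*((m:ℚ)+(j:ℚ)+2))) := by
  rw [show (((j+1+1 : ℕ) : ℤ) - 2) = ((j : ℕ) : ℤ) by push_cast; ring,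
    show (n+1+1) = (n+1)+1 from rfl, show (m+1+1) = (m+1)+1 from rfl,
    D_succ (n+1) (m+1) j (n+m+j+3) (by omega)]
  have hC : ((j.factorial : ℚ)) ≠ 0 := Nat.cast_ne_zero.mpr (Nat.factorial_ne_zero _)
  have h2 : ((n:ℚ)+1) ≠ 0 := by positivity
  have h2' : ((m:ℚ)+1) ≠ 0 := by positivity
  have h3 : ((n:ℚ)+(j:ℚ)+2) ≠ 0 := by positivity
  have h4 : ((m:ℚ)+(j:ℚ)+2) ≠ 0 := by positivity
  simp only [Nat.factorial_succ]
  push_cast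
  field_simp
  ring

lemma e5 (n m j : ℕ) :
    (-1:ℚ) ^ (j+1+1) * (((n+1) + (m+1) + (j+1+1) - 1).factorial : ℚ) *
        (((n+1 : ℕ) : ℚ) + ((m+1 : ℕ) : ℚ) + 2 * ((j+1+1 : ℕ) : ℚ)) /
        (((n+1).factorial : ℚ) * (((m+1).factorial : ℚ)) * (((j+1+1).factorial : ℚ))) =
      (-1:ℚ)^j * (((n+m+j+3).factorial : ℚ)) /
          ((n.factorial : ℚ) * (m.factorial : ℚ) * (j.factorial : ℚ)) *
        (((n:ℚ)+m+2*(j:ℚ)+6) / (((n:ℚ)+1)*((m:ℚ)+1)*((j:ℚ)+1)*((j:ℚ)+2))) := by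
  rw [show (n+1) + (m+1) + (j+1+1) - 1 = n+m+j+3 by omega]
  have hC : ((j.factorial : ℚ)) ≠ 0 := Nat.cast_ne_zero.mpr (Nat.factorial_ne_zero _)
  have h1 : ((j:ℚ)+1) ≠ 0 := by positivity
  have h1' : ((j:ℚ)+2) ≠ 0 := by positivity
  have h2 : ((n:ℚ)+1) ≠ 0 := by positivity
  have h2' : ((m:ℚ)+1) ≠ 0 := by positivity
  simp only [Nat.factorial_succ]
  push_cast
  field_simp
  ring

/-- The fourth difference of the structure-sheaf structure constants:
`D(n,m,j) − D(n+1,m,j−1) − D(n,m+1,j−1) + D(n+1,m+1,j−2) = (−1)^j (n+m+j−1)!·(n+m+2j)/(n!·m!·j!)`. -/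
theorem stmt2 (n m j : ℕ) (hn : 1 ≤ n) (hm : 1 ≤ m) :
    D n m (j : ℤ) - D (n + 1) m ((j : ℤ) - 1) - D n (m + 1) ((j : ℤ) - 1)
        + D (n + 1) (m + 1) ((j : ℤ) - 2)
      = (-1) ^ j * ((n + m + j - 1).factorial : ℚ) * ((n : ℚ) + m + 2 * j) /
          ((n.factorial : ℚ) * (m.factorial : ℚ) * (j.factorial : ℚ)) := by
  obtain ⟨n, rfl⟩ : ∃ k, n = k + 1 := ⟨n - 1, by omega⟩
  obtain ⟨m, rfl⟩ : ∃ k, m = k + 1 := ⟨m - 1, by omega⟩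
  have hnf : (n.factorial : ℚ) ≠ 0 := Nat.cast_ne_zero.mpr (Nat.factorial_ne_zero _)
  have hmf : (m.factorial : ℚ) ≠ 0 := Nat.cast_ne_zero.mpr (Nat.factorial_ne_zero _)
  rcases j with _ | _ | j
  · rw [D_neg (n+1+1) (m+1) (((0:ℕ):ℤ) - 1) (by norm_num),
      D_neg (n+1) (m+1+1) (((0:ℕ):ℤ) - 1) (by norm_num),
      D_neg (n+1+1) (m+1+1) (((0:ℕ):ℤ) - 2) (by norm_num),
      D_succ n m 0 (n+m+1) (by omega),
      show n + 1 + (m + 1) + 0 - 1 = n + m + 1 from by omega]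
    have ha : ((n:ℚ) + 1) ≠ 0 := by positivity
    have hb : ((m:ℚ) + 1) ≠ 0 := by positivity
    simp only [Nat.factorial_succ, Nat.factorial_zero]
    push_cast
    field_simp
    ring
  · rw [show ((1:ℕ):ℤ) - 1 = ((0:ℕ):ℤ) from by norm_num,
      D_neg (n+1+1) (m+1+1) (((1:ℕ):ℤ) - 2) (by norm_num),
      D_succ n m 1 (n+m+2) (by omega)]
    rw [show (n+1+1) = (n+1)+1 from rfl, D_succ (n+1) m 0 (n+m+2) (by omega)]
    rw [show (m+1+1) = (m+1)+1 from rfl, D_succ n (m+1) 0 (n+m+2) (by omega)]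
    rw [show n + 1 + (m + 1) + 1 - 1 = n + m + 2 from by omega]
    have ha : ((n:ℚ) + 2) ≠ 0 := by positivity
    have hb : ((m:ℚ) + 2) ≠ 0 := by positivity
    have hc : ((n:ℚ) + 1) ≠ 0 := by positivity
    have hd : ((m:ℚ) + 1) ≠ 0 := by positivity
    simp only [Nat.factorial_succ, Nat.factorial_zero, Nat.factorial_one]
    push_cast
    field_simp
    ring
  · have K := key (n:ℚ) (m:ℚ) (j:ℚ) (by positivity) (by positivity) (by positivity)
      (by positivity) (by positivity) (by positivity) (by positivity) (by positivity)
    linear_combination e1 n m j - e2 n m j - e3 n m j + e4 n m j - e5 n m j +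
      ((-1:ℚ)^j * (((n+m+j+3).factorial : ℚ)) /
        ((n.factorial : ℚ) * (m.factorial : ℚ) * (j.factorial : ℚ))) * K
end

section
/- For all integers k ≥ 0, Σ_{s=0}^{k} f(s,k) = 0. -/
open Finset

/-- The summand `f(s,k)` appearing in the key vanishing identity in the proof of the closed
form for the ordinary `K`-theory structure constants. -/
noncomputable def f (n m k s : ℕ) : ℚ :=
  (1 / ((s.factorial : ℚ) * ((k - s).factorial : ℚ))) *
    (((n : ℚ) + m + 2 * k - s) * (2 * (s : ℚ) - k) * ((n : ℚ) + m + k + s) /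
      (((s : ℚ) + m) * ((k : ℚ) + 1 - s) * ((s : ℚ) + 1) * ((m : ℚ) + k - s)))

lemma f_reflect (n m k s : ℕ) (hs : s ≤ k) : f n m k (k - s) = - f n m k s := by
  unfold f
  have h2 : k - (k - s) = s := by omega
  have h1 : ((k - s : ℕ) : ℚ) = (k : ℚ) - s := by
    push_cast [hs]; ring
  rw [h2, h1]
  ring

/-- The key vanishing identity: `Σ_{s=0}^{k} f(s,k) = 0`. -/
theorem stmt5 (n m k : ℕ) (hn : 1 ≤ n) (hm : 1 ≤ m) :
    ∑ s ∈ range (k + 1), f n m k s = 0 := by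
  have h := Finset.sum_range_reflect (fun s => f n m k s) (k + 1)
  simp only [Nat.add_sub_cancel] at h
  have h2 : ∑ j ∈ range (k + 1), f n m k (k - j)
      = -∑ j ∈ range (k + 1), f n m k j := by
    rw [← Finset.sum_neg_distrib]
    refine Finset.sum_congr rfl fun j hj => ?_
    exact f_reflect n m k j (Nat.lt_succ_iff.mp (mem_range.mp hj))
  linarith [h, h2]
end

section
/- For every integer k ≥ 1: if k is even then Σ_{j=1}^{k} q_j = (k(k+1)(k+2)/12)·(α₀ + α₁), and if k is odd then Σ_{j=1}^{k} q_j = ((k+1)(k²+2k+3)/12)·α₀ + ((k−1)(k+1)(k+3)/12)·α₁. -/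
open MvPolynomial Finset

/-- The equivariant Chevalley coefficient `q_j = ⌈j/2⌉²·α₀ + (⌊j/2⌋² + ⌊j/2⌋)·α₁`
in `ℚ[α₀, α₁]`, with `α₀ = X 0` and `α₁ = X 1`. -/
noncomputable def q (j : ℕ) : MvPolynomial (Fin 2) ℚ :=
  C ((((j + 1) / 2 : ℕ) : ℚ) ^ 2) * X 0 +
    C ((((j / 2 : ℕ) : ℚ)) ^ 2 + (((j / 2 : ℕ) : ℚ))) * X 1

lemma q_congr (a b a' b' : ℚ) (ha : a = a') (hb : b = b') :
    C (σ := Fin 2) (R := ℚ) a * X 0 + C b * X 1 = C a' * X 0 + C b' * X 1 := by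
  rw [ha, hb]

lemma q_congr2 (a b c : ℚ) (ha : a = c) (hb : b = c) :
    C (σ := Fin 2) (R := ℚ) a * X 0 + C b * X 1 = C c * (X 0 + X 1) := by
  rw [ha, hb, mul_add]

lemma aux (k : ℕ) : 1 ≤ k →
    (Even k → ∑ j ∈ Icc 1 k, q j
        = C ((k : ℚ) * ((k : ℚ) + 1) * ((k : ℚ) + 2) / 12) * (X 0 + X 1)) ∧
    (Odd k → ∑ j ∈ Icc 1 k, q j
        = C (((k : ℚ) + 1) * ((k : ℚ) ^ 2 + 2 * k + 3) / 12) * X 0 +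
          C (((k : ℚ) - 1) * ((k : ℚ) + 1) * ((k : ℚ) + 3) / 12) * X 1) := by
  induction k with
  | zero => omega
  | succ k ih =>
    intro _
    rcases Nat.eq_zero_or_pos k with hk0 | hk1
    · subst hk0
      constructor
      · intro h; exact absurd h (by decide)
      · intro _
        simp only [Icc_self, sum_singleton, q]
        norm_num
    · have ih := ih hk1
      have hsum : ∑ j ∈ Icc 1 (k + 1), q j = (∑ j ∈ Icc 1 k, q j) + q (k + 1) := by
        rw [← Finset.sum_Icc_succ_top (by omega)]
      rcases Nat.even_or_odd k with he | ho
      · -- k even, k+1 odd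
        obtain ⟨m, hm⟩ := he
        constructor
        · intro h
          rw [Nat.even_iff] at h; omega
        · intro _
          rw [hsum, ih.1 (by exact ⟨m, hm⟩)]
          have h1 : (k + 1 + 1) / 2 = m + 1 := by omega
          have h2 : (k + 1) / 2 = m := by omega
          rw [q, h1, h2, mul_add]
          have hkm : (k : ℚ) = 2 * m := by rw [hm]; push_cast; ring
          rw [show ∀ a c d : MvPolynomial (Fin 2) ℚ,
              (a * X 0 + a * X 1) + (c * X 0 + d * X 1)
                = (a + c) * X 0 + (a + d) * X 1 from fun a c d => by ring,
            ← C_add, ← C_add]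
          apply q_congr <;> · push_cast [hkm]; ring
      · -- k odd, k+1 even
        obtain ⟨m, hm⟩ := ho
        constructor
        · intro _
          rw [hsum, ih.2 ⟨m, hm⟩]
          have h1 : (k + 1 + 1) / 2 = m + 1 := by omega
          have h2 : (k + 1) / 2 = m + 1 := by omega
          rw [q, h1, h2, mul_add]
          have hkm : (k : ℚ) = 2 * m + 1 := by rw [hm]; push_cast; ring
          rw [show ∀ a b c d : MvPolynomial (Fin 2) ℚ,
              (a * X 0 + b * X 1) + (c * X 0 + d * X 1)
                = (a + c) * X 0 + (b + d) * X 1 from fun a b c d => by ring,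
            ← C_add, ← C_add]
          apply q_congr2 <;> · push_cast [hkm]; ring
        · intro h
          rw [Nat.odd_iff] at h; omega

/-- Closed form for `Σ_{j=1}^{k} q_j` according to the parity of `k`. -/
theorem stmt12 (k : ℕ) (hk : 1 ≤ k) :
    (Even k → ∑ j ∈ Icc 1 k, q j
        = C ((k : ℚ) * ((k : ℚ) + 1) * ((k : ℚ) + 2) / 12) * (X 0 + X 1)) ∧
    (Odd k → ∑ j ∈ Icc 1 k, q j
        = C (((k : ℚ) + 1) * ((k : ℚ) ^ 2 + 2 * k + 3) / 12) * X 0 +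
          C (((k : ℚ) - 1) * ((k : ℚ) + 1) * ((k : ℚ) + 3) / 12) * X 1) :=
  aux k hk
end

section
/- In the setup below, for every integer n ≥ 1: ε₁ⁿ = Σ_{k=1}^{n} k!·h_{n−k}(q₁, …, q_k)·ε_k. -/
open Finset

/-- `hsum d s x` is the complete homogeneous symmetric polynomial of degree `d` in the
variables `x i`, `i ∈ s`: the sum of all monomials of degree `d` in these variables
(with `hsum 0 s x = 1`). -/
def hsum {R : Type*} [CommSemiring R] (d : ℕ) (s : Finset ℕ) (x : ℕ → R) : R :=
  ∑ μ ∈ s.sym d, ((μ : Multiset ℕ).map x).prod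

lemma hsum_zero {R : Type*} [CommSemiring R] (s : Finset ℕ) (x : ℕ → R) :
    hsum 0 s x = 1 := by
  simp only [hsum, Finset.sym_zero, Finset.sum_singleton]
  rfl

lemma hsum_empty {R : Type*} [CommSemiring R] (d : ℕ) (x : ℕ → R) :
    hsum (d + 1) ∅ x = 0 := by
  simp [hsum]

lemma hsum_insert {R : Type*} [CommSemiring R] (d : ℕ) (a : ℕ) (s : Finset ℕ) (x : ℕ → R)
    (h : a ∉ s) :
    hsum (d + 1) (insert a s) x = hsum (d + 1) s x + x a * hsum d (insert a s) x := by
  classical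
  unfold hsum
  rw [← Finset.sum_filter_add_sum_filter_not ((insert a s).sym (d+1))
      (fun μ => a ∈ μ)]
  rw [add_comm]
  congr 1
  · -- multisets not containing a: equal to s.sym (d+1)
    congr 1
    ext μ
    simp only [mem_filter, Finset.mem_sym_iff, Finset.mem_insert]
    constructor
    · rintro ⟨h1, h2⟩ b hb
      rcases h1 b hb with rfl | hb'
      · exact absurd hb h2
      · exact hb'
    · intro h1
      exact ⟨fun b hb => Or.inr (h1 b hb), fun ha => h (h1 a ha)⟩
  · -- multisets containing a
    rw [Finset.mul_sum]
    refine Finset.sum_nbij' (fun μ => if hm : a ∈ μ then μ.erase a hm else Sym.replicate d a)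
      (fun ν => a ::ₛ ν) ?_ ?_ ?_ ?_ ?_
    · intro μ hμ
      simp only [mem_filter] at hμ
      rw [dif_pos hμ.2]
      rw [Finset.mem_sym_iff]
      intro b hb
      have := Sym.mem_cons_of_mem (b := a) hb
      rw [Sym.cons_erase hμ.2] at this
      exact Finset.mem_sym_iff.mp hμ.1 b this
    · intro ν hν
      simp only [mem_filter, Finset.mem_sym_iff]
      refine ⟨fun b hb => ?_, Sym.mem_cons_self a ν⟩
      rcases Sym.mem_cons.mp hb with rfl | hb'
      · exact Finset.mem_insert_self _ s
      · exact Finset.mem_sym_iff.mp hν b hb'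
    · intro μ hμ
      simp only [mem_filter] at hμ
      rw [dif_pos hμ.2]
      exact Sym.cons_erase hμ.2
    · intro ν hν
      rw [dif_pos (Sym.mem_cons_self a ν)]
      exact Sym.erase_cons_head ν a
    · intro μ hμ
      simp only [mem_filter] at hμ
      rw [dif_pos hμ.2]
      conv_lhs => rw [← Multiset.cons_erase (show a ∈ (μ : Multiset ℕ) from hμ.2)]
      rw [Multiset.map_cons, Multiset.prod_cons, Sym.coe_erase]

lemma Icc_one_succ (j : ℕ) : Icc 1 (j + 1) = insert (j + 1) (Icc 1 j) := by
  ext m; simp only [mem_Icc, mem_insert]; omega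

/-- If `ε₁·ε_m = q_m·ε_m + (m+1)·ε_{m+1}` for all `m ≥ 1`, then
`ε₁ⁿ = Σ_{k=1}^{n} k!·h_{n−k}(q₁, …, q_k)·ε_k` for all `n ≥ 1`. -/
theorem stmt13 {R A : Type*} [CommRing R] [CommRing A] [Algebra R A]
    (q : ℕ → R) (ε : ℕ → A)
    (hchev : ∀ m : ℕ, 1 ≤ m → ε 1 * ε m = q m • ε m + (m + 1) • ε (m + 1)) :
    ∀ n : ℕ, 1 ≤ n →
      ε 1 ^ n = ∑ k ∈ Icc 1 n, (k.factorial • hsum (n - k) (Icc 1 k) q) • ε k := by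
  intro n hn
  induction n, hn using Nat.le_induction with
  | base =>
    simp [hsum_zero, Nat.factorial]
  | succ n hn ih =>
    set c : ℕ → R := fun k => k.factorial • hsum (n - k) (Icc 1 k) q with hc
    set d : ℕ → R := fun k => k.factorial • hsum (n + 1 - k) (Icc 1 k) q with hd
    have hc0 : c 0 = 0 := by
      obtain ⟨m, rfl⟩ : ∃ m, n = m + 1 := ⟨n - 1, by omega⟩
      simp [hc, hsum_empty]
    have key : ∀ k, 1 ≤ k → k ≤ n → d k = c k * q k + k • c (k - 1) := by
      intro k hk1 hkn
      obtain ⟨j, rfl⟩ : ∃ j, k = j + 1 := ⟨k - 1, by omega⟩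
      have h1 : n + 1 - (j + 1) = (n - (j + 1)) + 1 := by omega
      have h2 : n - j = (n - (j + 1)) + 1 := by omega
      have h4 : (j + 1) ∉ Icc 1 j := by simp
      simp only [hd, hc, Nat.add_sub_cancel, h1, h2]
      rw [Icc_one_succ j, hsum_insert _ _ _ _ h4]
      simp only [smul_smul, nsmul_eq_mul]
      push_cast [Nat.factorial_succ]
      ring
    have hdn : d (n + 1) • ε (n + 1) = ((n + 1) • c n) • ε (n + 1) := by
      simp only [hd, hc, Nat.sub_self, hsum_zero, Nat.factorial_succ, smul_smul, nsmul_eq_mul]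
      push_cast
      ring_nf
    rw [pow_succ, ih]
    rw [Finset.sum_mul]
    have e1 : ∀ k ∈ Icc 1 n, c k • ε k * ε 1
        = (c k * q k) • ε k + ((k + 1) • c k) • ε (k + 1) := by
      intro k hk
      have hk1 := (mem_Icc.mp hk).1
      rw [smul_mul_assoc, mul_comm (ε k) (ε 1), hchev k hk1, smul_add, smul_smul,
        smul_comm (c k) ((k + 1) : ℕ), ← smul_assoc]
    rw [Finset.sum_congr rfl e1, Finset.sum_add_distrib]
    have e2 : ∑ k ∈ Icc 1 n, ((k + 1) • c k) • ε (k + 1)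
        = ∑ k ∈ Icc 2 (n + 1), (k • c (k - 1)) • ε k := by
      refine Finset.sum_nbij' (fun k => k + 1) (fun k => k - 1) ?_ ?_ ?_ ?_ ?_ <;>
        simp only [mem_Icc] <;> intro k hk <;> try omega
      simp only [Nat.add_sub_cancel]
    have e3 : ∑ k ∈ Icc 2 (n + 1), (k • c (k - 1)) • ε k
        = ∑ k ∈ Icc 1 (n + 1), (k • c (k - 1)) • ε k := by
      rw [show Icc 1 (n + 1) = insert 1 (Icc 2 (n + 1)) by ext m; simp only [mem_Icc, mem_insert]; omega,
        Finset.sum_insert (by simp), hc0]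
      simp
    rw [e2, e3]
    have e4 : ∑ k ∈ Icc 1 (n + 1), (k • c (k - 1)) • ε k
        = ((n + 1) • c n) • ε (n + 1) + ∑ k ∈ Icc 1 n, (k • c (k - 1)) • ε k := by
      rw [Icc_one_succ n, Finset.sum_insert (by simp)]
      simp only [Nat.add_sub_cancel]
    have e5 : ∑ k ∈ Icc 1 (n + 1), d k • ε k
        = d (n + 1) • ε (n + 1) + ∑ k ∈ Icc 1 n, d k • ε k := by
      rw [Icc_one_succ n, Finset.sum_insert (by simp)]
    show _ = ∑ k ∈ Icc 1 (n + 1), d k • ε k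
    rw [e4, e5, hdn]
    have e6 : ∑ k ∈ Icc 1 n, d k • ε k
        = ∑ k ∈ Icc 1 n, ((c k * q k) • ε k + (k • c (k - 1)) • ε k) := by
      refine Finset.sum_congr rfl fun k hk => ?_
      have hk' := mem_Icc.mp hk
      rw [key k hk'.1 hk'.2, add_smul]
    rw [e6, Finset.sum_add_distrib]
    abel
end

section
/- In the setup below, for all integers n ≥ 0 and m ≥ 1: ε₁ⁿ·ε_m = Σ_{i=0}^{n} ((m+i)!/m!)·h_{n−i}(q_m, q_{m+1}, …, q_{m+i})·ε_{m+i}. -/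
open Finset

lemma hsum_succ_insert {R : Type*} [CommSemiring R] (d : ℕ) (s : Finset ℕ) (k : ℕ)
    (hk : k ∉ s) (x : ℕ → R) :
    hsum (d + 1) (insert k s) x = x k * hsum d (insert k s) x + hsum (d + 1) s x := by
  classical
  unfold hsum
  rw [← Finset.sum_filter_add_sum_filter_not ((insert k s).sym (d+1)) (fun μ => k ∈ μ)]
  congr 1
  · rw [Finset.mul_sum]
    refine (Finset.sum_bij' (fun (μ : Sym ℕ (d+1)) (h : μ ∈ _) => μ.erase k (by
        simpa using (Finset.mem_filter.1 h).2))
      (fun (ν : Sym ℕ d) (h : ν ∈ (insert k s).sym d) => k ::ₛ ν) ?_ ?_ ?_ ?_ ?_)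
    · intro μ hμ
      rw [Finset.mem_sym_iff]
      intro a ha
      have := Finset.mem_sym_iff.1 (Finset.mem_filter.1 hμ).1
      have ha' : a ∈ (μ : Multiset ℕ).erase k := by
        rw [← Sym.coe_erase]; exact ha
      exact this a (Multiset.mem_of_mem_erase ha')
    · intro ν hν
      rw [Finset.mem_filter]
      refine ⟨Finset.mem_sym_iff.2 ?_, by simp [Sym.mem_cons]⟩
      intro a ha
      rcases Sym.mem_cons.1 ha with rfl | h
      · exact Finset.mem_insert_self _ _
      · exact Finset.mem_sym_iff.1 hν a h
    · intro μ hμ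
      exact Sym.cons_erase _
    · intro ν hν
      exact Sym.erase_cons_head _ _ _
    · intro μ hμ
      have h : k ∈ μ := by simpa using (Finset.mem_filter.1 hμ).2
      have h' : k ∈ (μ : Multiset ℕ) := h
      rw [Sym.coe_erase, ← Multiset.cons_erase h', Multiset.map_cons, Multiset.prod_cons,
        Multiset.erase_cons_head]
  · congr 1
    ext μ
    simp only [Finset.mem_filter, Finset.mem_sym_iff, Finset.mem_insert]
    constructor
    · rintro ⟨h1, h2⟩ a ha
      rcases h1 a ha with rfl | h
      · exact absurd ha h2
      · exact h
    · intro h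
      exact ⟨fun a ha => Or.inr (h a ha), fun hkμ => hk (h k hkμ)⟩

lemma sum_shift {A : Type*} [AddCommMonoid A] (n : ℕ) (P S B : ℕ → A)
    (h0 : B 0 = P 0)
    (hterm : ∀ i, i < n → B (i + 1) = P (i + 1) + S i)
    (hlast : B (n + 1) = S n) :
    (∑ i ∈ range (n + 1), P i) + ∑ i ∈ range (n + 1), S i = ∑ i ∈ range (n + 2), B i := by
  rw [Finset.sum_range_succ B, Finset.sum_range_succ S, hlast,
    Finset.sum_range_succ' B, Finset.sum_range_succ' P,
    Finset.sum_congr rfl (fun i hi => hterm i (Finset.mem_range.1 hi)),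
    Finset.sum_add_distrib, h0]
  abel

/-- If `ε₁·ε_m = q_m·ε_m + (m+1)·ε_{m+1}` for all `m ≥ 1`, then
`ε₁ⁿ·ε_m = Σ_{i=0}^{n} ((m+i)!/m!)·h_{n−i}(q_m, …, q_{m+i})·ε_{m+i}` for all `n ≥ 0`, `m ≥ 1`. -/
theorem stmt16 {R A : Type*} [CommRing R] [CommRing A] [Algebra R A]
    (q : ℕ → R) (ε : ℕ → A)
    (hchev : ∀ m : ℕ, 1 ≤ m → ε 1 * ε m = q m • ε m + (m + 1) • ε (m + 1)) :
    ∀ n m : ℕ, 1 ≤ m →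
      ε 1 ^ n * ε m = ∑ i ∈ range (n + 1),
        (((m + i).factorial / m.factorial) • hsum (n - i) (Icc m (m + i)) q) • ε (m + i) := by
  intro n m hm
  induction n with
  | zero =>
    simp [hsum_zero, Nat.div_self (Nat.factorial_pos m)]
  | succ n ih =>
    have key : ∀ i : ℕ, ((m + (i + 1)).factorial / m.factorial)
        = (m + i + 1) * ((m + i).factorial / m.factorial) := by
      intro i
      rw [← Nat.mul_div_assoc _ (Nat.factorial_dvd_factorial (Nat.le_add_right m i))]
      congr 1
    have hicc : ∀ i : ℕ, Icc m (m + (i + 1)) = insert (m + i + 1) (Icc m (m + i)) := by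
      intro i
      rw [← Nat.add_assoc]
      exact (Finset.insert_Icc_right_eq_Icc_add_one (by omega)).symm
    have hnotmem : ∀ i : ℕ, m + i + 1 ∉ Icc m (m + i) := by
      intro i
      simp [Finset.mem_Icc]
    have step1 : ε 1 ^ (n + 1) * ε m
        = ∑ i ∈ range (n + 1), (((m + i).factorial / m.factorial) • hsum (n - i) (Icc m (m + i)) q) •
            (q (m + i) • ε (m + i) + (m + i + 1) • ε (m + i + 1)) := by
      rw [pow_succ', mul_assoc, ih, Finset.mul_sum]
      refine Finset.sum_congr rfl fun i _ => ?_
      rw [mul_smul_comm, hchev (m + i) (le_trans hm (Nat.le_add_right m i))]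
    rw [step1]
    simp only [smul_add, Finset.sum_add_distrib]
    refine sum_shift n
      (fun i => (((m + i).factorial / m.factorial) • hsum (n - i) (Icc m (m + i)) q) •
        (q (m + i) • ε (m + i)))
      (fun i => (((m + i).factorial / m.factorial) • hsum (n - i) (Icc m (m + i)) q) •
        ((m + i + 1) • ε (m + i + 1)))
      (fun i => (((m + i).factorial / m.factorial) • hsum (n + 1 - i) (Icc m (m + i)) q) •
        ε (m + i)) ?_ ?_ ?_
    · -- B 0 = P 0
      have h1 : Icc m (m + 0) = insert m (∅ : Finset ℕ) := by simp
      have h2 : n + 1 - 0 = n + 1 := rfl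
      rw [h1, h2, hsum_succ_insert n ∅ m (Finset.notMem_empty m) q, hsum_empty, add_zero,
        Nat.div_self (Nat.factorial_pos m), Nat.sub_zero, one_smul, one_smul,
        smul_smul, mul_comm, add_zero]
    · -- B (i+1) = P (i+1) + S i
      intro i hi
      have hd : n + 1 - (i + 1) = (n - (i + 1)) + 1 := by omega
      have hd2 : (n - (i + 1)) + 1 = n - i := by omega
      have hidx : m + (i + 1) = m + i + 1 := by omega
      rw [hd, hicc i, hsum_succ_insert _ _ _ (hnotmem i) q, hd2, key i, hidx]
      rw [smul_add, add_smul]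
      congr 1
      · rw [smul_smul, smul_mul_assoc,
          mul_comm (hsum (n - (i + 1)) (insert (m + i + 1) (Icc m (m + i))) q) (q (m + i + 1))]
      · rw [mul_smul, smul_assoc, smul_comm]
    · -- B (n+1) = S n
      have h1 : n + 1 - (n + 1) = 0 := by omega
      have h2 : n - n = 0 := Nat.sub_self n
      have hidx : m + (n + 1) = m + n + 1 := by omega
      rw [h1, h2, hsum_zero, hsum_zero, key n, hidx, mul_smul, smul_assoc, smul_comm]
end

section
/- Let R be a commutative ring and let d : ℕ×ℕ×ℕ → R, written d^k_{n,m} := d(n,m,k), satisfy: (i) d^k_{n,m} = 0 whenever k < n or k < m; and (ii) for all n, m, k ≥ 0 the relation Σ_{i=0}^{k} d^i_{n,m}·d^k_{1,i} = Σ_{j=0}^{k} d^j_{1,n}·d^k_{j,m}. Then for all n, m, k ≥ 0 with k > n: (d^n_{1,n} − d^k_{1,k})·d^k_{n,m} = Σ_{i=max(n,m)}^{k−1} d^i_{n,m}·d^k_{1,i} − Σ_{j=n+1}^{k} d^j_{1,n}·d^k_{j,m}. -/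
open Finset

/-- If the structure constants `d^k_{n,m} = d n m k` (with values in a commutative ring)
satisfy the support condition and the associativity relation, then they satisfy the
inductive formula
`(d^n_{1,n} − d^k_{1,k})·d^k_{n,m} = Σ_{i=max(n,m)}^{k−1} d^i_{n,m}·d^k_{1,i} − Σ_{j=n+1}^{k} d^j_{1,n}·d^k_{j,m}`
for `k > n`. -/
theorem stmt18 {R : Type*} [CommRing R] (d : ℕ → ℕ → ℕ → R)
    (hsupp : ∀ n m k : ℕ, k < n ∨ k < m → d n m k = 0)
    (hassoc : ∀ n m k : ℕ,
      ∑ i ∈ range (k + 1), d n m i * d 1 i k = ∑ j ∈ range (k + 1), d 1 n j * d j m k) :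
    ∀ n m k : ℕ, n < k →
      (d 1 n n - d 1 k k) * d n m k
        = ∑ i ∈ Icc (max n m) (k - 1), d n m i * d 1 i k
          - ∑ j ∈ Icc (n + 1) k, d 1 n j * d j m k := by
  intro n m k hnk
  have hk1 : 1 ≤ k := by omega
  by_cases hm : m ≤ k
  · have hmax : max n m ≤ k := max_le (le_of_lt hnk) hm
    have h1 : ∑ i ∈ range (k + 1), d n m i * d 1 i k
        = ∑ i ∈ Icc (max n m) (k - 1), d n m i * d 1 i k + d n m k * d 1 k k := by
      have e1 : ∑ i ∈ range (k + 1), d n m i * d 1 i k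
          = ∑ i ∈ Icc (max n m) k, d n m i * d 1 i k := by
        refine (Finset.sum_subset ?_ ?_).symm
        · intro i hi
          simp only [mem_Icc] at hi
          simp only [mem_range]; omega
        · intro i hi hni
          simp only [mem_range] at hi
          simp only [mem_Icc] at hni
          have : i < n ∨ i < m := by omega
          rw [hsupp n m i this, zero_mul]
      rw [e1]
      have hk : k = (k - 1) + 1 := by omega
      rw [hk, Finset.sum_Icc_succ_top (by omega : max n m ≤ (k - 1) + 1)]
      simp
    have h2 : ∑ j ∈ range (k + 1), d 1 n j * d j m k
        = d 1 n n * d n m k + ∑ j ∈ Icc (n + 1) k, d 1 n j * d j m k := by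
      have e1 : ∑ j ∈ range (k + 1), d 1 n j * d j m k
          = ∑ j ∈ Icc n k, d 1 n j * d j m k := by
        refine (Finset.sum_subset ?_ ?_).symm
        · intro j hj
          simp only [mem_Icc] at hj
          simp only [mem_range]; omega
        · intro j hj hnj
          simp only [mem_range] at hj
          simp only [mem_Icc] at hnj
          rw [hsupp 1 n j (Or.inr (by omega)), zero_mul]
      rw [e1, Finset.Icc_eq_cons_Ioc (by omega : n ≤ k), Finset.sum_cons,
        ← Finset.Icc_add_one_left_eq_Ioc]
    have key := hassoc n m k
    rw [h1, h2] at key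
    linear_combination -key
  · have hz : d n m k = 0 := hsupp n m k (Or.inr (by omega))
    have hI : Icc (max n m) (k - 1) = ∅ := Finset.Icc_eq_empty (by omega)
    have hJ : ∑ j ∈ Icc (n + 1) k, d 1 n j * d j m k = 0 := by
      refine Finset.sum_eq_zero fun j hj => ?_
      rw [hsupp j m k (Or.inr (by omega)), mul_zero]
    rw [hz, hI, hJ]
    simp
end

section
/- For all integers i ≥ 1 and j ≥ 0, Σ_{ℓ=i}^{i+j} q_ℓ equals: (1/12)(3i²+2j+6ij+3i²j+3j²+3ij²+j³)·α₀ + (1/12)(6i+3i²+2j+6ij+3i²j+3j²+3ij²+j³)·α₁ if i and j are both even; (1/12)(1+j)(3i+3i²+2j+3ij+j²)·(α₀+α₁) if i and j are both odd; (1/12)(1+j)(3+3i+3i²+2j+3ij+j²)·α₀ + (1/12)(1+j)(−3+3i+3i²+2j+3ij+j²)·α₁ if i is even and j is odd; (1/12)(3+6i+3i²+5j+6ij+3i²j+3j²+3ij²+j³)·α₀ + (1/12)(−3+3i²−j+6ij+3i²j+3j²+3ij²+j³)·α₁ if i is odd and j is even. -/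
open MvPolynomial Finset

lemma q_even' (k : ℕ) : q (2*k) = C ((k:ℚ)^2) * X 0 + C ((k:ℚ)^2 + (k:ℚ)) * X 1 := by
  have h1 : (2*k+1)/2 = k := by omega
  have h2 : (2*k)/2 = k := by omega
  simp [q, h1, h2]

lemma q_odd' (k : ℕ) : q (2*k+1) = C (((k:ℚ)+1)^2) * X 0 + C ((k:ℚ)^2 + (k:ℚ)) * X 1 := by
  have h1 : (2*k+1+1)/2 = k+1 := by omega
  have h2 : (2*k+1)/2 = k := by omega
  rw [q, h1, h2]; push_cast; ring

lemma combineCX (c1 c2 d1 d2 e1 e2 : ℚ) (h1 : c1 + d1 = e1) (h2 : c2 + d2 = e2) :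
    C c1 * X 0 + C c2 * X 1 + (C d1 * (X 0 : MvPolynomial (Fin 2) ℚ) + C d2 * X 1)
      = C e1 * X 0 + C e2 * X 1 := by
  rw [add_add_add_comm, ← add_mul, ← add_mul, ← map_add, ← map_add, h1, h2]

/-- Closed form for `Q¹_{i,j} = Σ_{ℓ=i}^{i+j} q_ℓ` according to the parities of `i` and `j`. -/
theorem stmt19 (i j : ℕ) (hi : 1 ≤ i) :
    (Even i ∧ Even j → ∑ ℓ ∈ Icc i (i + j), q ℓ
        = C ((1 / 12) * (3 * (i : ℚ) ^ 2 + 2 * j + 6 * i * j + 3 * (i : ℚ) ^ 2 * j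
              + 3 * (j : ℚ) ^ 2 + 3 * i * (j : ℚ) ^ 2 + (j : ℚ) ^ 3)) * X 0
          + C ((1 / 12) * (6 * (i : ℚ) + 3 * (i : ℚ) ^ 2 + 2 * j + 6 * i * j
              + 3 * (i : ℚ) ^ 2 * j + 3 * (j : ℚ) ^ 2 + 3 * i * (j : ℚ) ^ 2 + (j : ℚ) ^ 3)) * X 1) ∧
    (Odd i ∧ Odd j → ∑ ℓ ∈ Icc i (i + j), q ℓ
        = C ((1 / 12) * (1 + (j : ℚ)) * (3 * i + 3 * (i : ℚ) ^ 2 + 2 * j + 3 * i * j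
              + (j : ℚ) ^ 2)) * (X 0 + X 1)) ∧
    (Even i ∧ Odd j → ∑ ℓ ∈ Icc i (i + j), q ℓ
        = C ((1 / 12) * (1 + (j : ℚ)) * (3 + 3 * i + 3 * (i : ℚ) ^ 2 + 2 * j + 3 * i * j
              + (j : ℚ) ^ 2)) * X 0
          + C ((1 / 12) * (1 + (j : ℚ)) * (-3 + 3 * i + 3 * (i : ℚ) ^ 2 + 2 * j + 3 * i * j
              + (j : ℚ) ^ 2)) * X 1) ∧
    (Odd i ∧ Even j → ∑ ℓ ∈ Icc i (i + j), q ℓ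
        = C ((1 / 12) * (3 + 6 * (i : ℚ) + 3 * (i : ℚ) ^ 2 + 5 * j + 6 * i * j
              + 3 * (i : ℚ) ^ 2 * j + 3 * (j : ℚ) ^ 2 + 3 * i * (j : ℚ) ^ 2 + (j : ℚ) ^ 3)) * X 0
          + C ((1 / 12) * (-3 + 3 * (i : ℚ) ^ 2 - j + 6 * i * j + 3 * (i : ℚ) ^ 2 * j
              + 3 * (j : ℚ) ^ 2 + 3 * i * (j : ℚ) ^ 2 + (j : ℚ) ^ 3)) * X 1) := by
  induction j with
  | zero =>
    refine ⟨?_, ?_, ?_, ?_⟩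
    · rintro ⟨⟨a, rfl⟩, -⟩
      rw [add_zero, Icc_self, sum_singleton, show a + a = 2*a from by ring, q_even']
      congr 1 <;> congr 1 <;> exact congrArg C (by push_cast; ring)
    · rintro ⟨-, h⟩; exact absurd h (by decide)
    · rintro ⟨-, h⟩; exact absurd h (by decide)
    · rintro ⟨⟨a, rfl⟩, -⟩
      rw [add_zero, Icc_self, sum_singleton, q_odd']
      congr 1 <;> congr 1 <;> exact congrArg C (by push_cast; ring)
  | succ j IH =>
    refine ⟨?_, ?_, ?_, ?_⟩
    · -- Even i, Even (j+1), so Odd j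
      rintro ⟨⟨a, rfl⟩, hj⟩
      have hoj : Odd j := by
        rw [Nat.odd_iff]; rw [Nat.even_iff] at hj; omega
      obtain ⟨b, rfl⟩ := hoj
      rw [show a + a + (2*b+1+1) = (a + a + (2*b+1)) + 1 from by ring,
          Finset.sum_Icc_succ_top (by omega),
          IH.2.2.1 ⟨⟨a, rfl⟩, ⟨b, rfl⟩⟩,
          show a + a + (2*b+1) + 1 = 2*(a+b+1) from by ring, q_even']
      exact combineCX _ _ _ _ _ _ (by push_cast; ring) (by push_cast; ring)
    · -- Odd i, Odd (j+1), so Even j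
      rintro ⟨⟨a, rfl⟩, hj⟩
      have hej : Even j := by
        rw [Nat.even_iff]; rw [Nat.odd_iff] at hj; omega
      obtain ⟨b, hb⟩ := hej
      have hb' : j = 2*b := by omega
      subst hb'
      rw [show 2*a + 1 + (2*b+1) = (2*a + 1 + 2*b) + 1 from by ring,
          Finset.sum_Icc_succ_top (by omega),
          IH.2.2.2 ⟨⟨a, rfl⟩, ⟨b, by ring⟩⟩,
          show 2*a + 1 + 2*b + 1 = 2*(a+b+1) from by ring, q_even']
      simp only [mul_add]
      exact combineCX _ _ _ _ _ _ (by push_cast; ring) (by push_cast; ring)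
    · -- Even i, Odd (j+1), so Even j
      rintro ⟨⟨a, rfl⟩, hj⟩
      have hej : Even j := by
        rw [Nat.even_iff]; rw [Nat.odd_iff] at hj; omega
      obtain ⟨b, hb⟩ := hej
      have hb' : j = 2*b := by omega
      subst hb'
      rw [show a + a + (2*b+1) = (a + a + 2*b) + 1 from by ring,
          Finset.sum_Icc_succ_top (by omega),
          IH.1 ⟨⟨a, rfl⟩, ⟨b, by ring⟩⟩,
          show a + a + 2*b + 1 = 2*(a+b) + 1 from by ring, q_odd']
      exact combineCX _ _ _ _ _ _ (by push_cast; ring) (by push_cast; ring)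
    · -- Odd i, Even (j+1), so Odd j
      rintro ⟨⟨a, rfl⟩, hj⟩
      have hoj : Odd j := by
        rw [Nat.odd_iff]; rw [Nat.even_iff] at hj; omega
      obtain ⟨b, rfl⟩ := hoj
      rw [show 2*a + 1 + (2*b+1+1) = (2*a + 1 + (2*b+1)) + 1 from by ring,
          Finset.sum_Icc_succ_top (by omega),
          IH.2.1 ⟨⟨a, rfl⟩, ⟨b, rfl⟩⟩,
          show 2*a + 1 + (2*b+1) + 1 = 2*(a+b+1) + 1 from by ring, q_odd']
      simp only [mul_add]
      exact combineCX _ _ _ _ _ _ (by push_cast; ring) (by push_cast; ring)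
end
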